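/- Let T be an integral domain, K a subring of T that is a field, and M a nonzero maximal ideal of T such that T = K + M (every element of T is the sum of an element of K and an element of M). Let k be a subfield of K and set R = k + M, a subring of T. If M contains no irreducible element of T, then R is a U-FFD if and only if T is a U-FFD. -/

import Mathlib

/-- The set of factorizations of `a`: multisets of atoms (irreducible elements), counted up
to associates, whose product is associated to `a`. -/
def FactorizationsOf {α : Type*} [CommMonoid α] (a : α) : Set (Multiset (Associates α)) :=
  {s | (∀ p ∈ s, Irreducible p) ∧ s.prod = Associates.mk a}

/-- An element is atomic if it is a unit or a finite product of atoms; equivalently, some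
finite multiset of atoms has product associated to it. -/
def IsAtomicElem {α : Type*} [CommMonoid α] (a : α) : Prop :=
  ∃ s : Multiset α, (∀ p ∈ s, Irreducible p) ∧ Associated s.prod a

/-- An integral domain is an unrestricted finite factorization domain (U-FFD) if every
nonzero atomic element has only finitely many factorizations. -/
def IsUFFD (R : Type*) [CommRing R] : Prop :=
  ∀ a : R, a ≠ 0 → IsAtomicElem a → (FactorizationsOf a).Finite

set_option linter.unusedSectionVars false
set_option linter.unusedVariables false
set_option maxHeartbeats 1000000

namespace UFFD7

variable {T : Type*} [CommRing T] [IsDomain T]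

/-- inverse inside a subring that is a field -/
lemma exists_inv (S : Subring T) (hS : IsField S) {a : T} (haS : a ∈ S) (ha0 : a ≠ 0) :
    ∃ b ∈ S, a * b = 1 := by
  obtain ⟨b, hb⟩ := hS.mul_inv_cancel (a := (⟨a, haS⟩ : S))
    (fun hc => ha0 (by simpa [Subtype.ext_iff] using hc))
  exact ⟨(b : T), b.2, by simpa using congrArg Subtype.val hb⟩

/-- K ∩ M = 0 -/
lemma KM (K : Subring T) (hK : IsField K) (M : Ideal T) (hMmax : M.IsMaximal)
    {a : T} (haK : a ∈ K) (haM : a ∈ M) : a = 0 := by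
  by_contra h0
  obtain ⟨b, -, hab⟩ := exists_inv K hK haK h0
  exact hMmax.ne_top ((Ideal.eq_top_iff_one M).2 (hab ▸ M.mul_mem_right b haM))

section Main

variable (K : Subring T) (hK : IsField K)
    (M : Ideal T) (hMmax : M.IsMaximal)
    (hTKM : ∀ t : T, ∃ a ∈ K, ∃ m ∈ M, t = a + m)
    (k : Subring T) (hkK : k ≤ K) (hk : IsField k)
    (R : Subring T) (hR : ∀ x : T, x ∈ R ↔ ∃ a ∈ k, ∃ m ∈ M, x = a + m)
    (hirr : ∀ p ∈ M, ¬ Irreducible p)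

omit [IsDomain T] in
/-- associated in R implies associated in T -/
lemma assocT {x y : R} (h : Associated x y) : Associated (x : T) (y : T) :=
  h.map (R.subtype : R →+* T).toMonoidHom

include hK hMmax hTKM hkK hk hR hirr

lemma memR_iff (x : T) : x ∈ R ↔ ∃ a ∈ k, x - a ∈ M := by
  rw [hR x]
  constructor
  · rintro ⟨a, ha, m, hm, rfl⟩; exact ⟨a, ha, by simpa using hm⟩
  · rintro ⟨a, ha, hm⟩; exact ⟨a, ha, x - a, hm, by ring⟩

lemma decompT (t : T) : ∃ a ∈ K, t - a ∈ M := by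
  obtain ⟨a, ha, m, hm, rfl⟩ := hTKM t
  exact ⟨a, ha, by simpa using hm⟩

lemma MsubR {m : T} (hm : m ∈ M) : m ∈ R :=
  (hR m).2 ⟨0, zero_mem _, m, hm, by ring⟩

/-- units of T lying in R are units of R -/
lemma unitR (x : R) (h : IsUnit (x : T)) : IsUnit x := by
  obtain ⟨u, hu⟩ := h
  have hxy : (x : T) * (↑u⁻¹ : T) = 1 := by rw [← hu]; exact u.mul_inv
  obtain ⟨a, hak, haM⟩ := (memR_iff K hK M hMmax hTKM k hkK hk R hR hirr (x : T)).1 x.2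
  obtain ⟨b, hbK, hbM⟩ := decompT K hK M hMmax hTKM k hkK hk R hR hirr (↑u⁻¹ : T)
  have hab : a * b = 1 := by
    have h1 : (1 : T) - a * b ∈ M := by
      have : (1 : T) - a * b = ((x : T) - a) * (↑u⁻¹ : T) + a * ((↑u⁻¹ : T) - b) := by
        rw [← hxy]; ring
      rw [this]
      exact M.add_mem (M.mul_mem_right _ haM) (M.mul_mem_left _ hbM)
    have h2 : (1 : T) - a * b ∈ K := K.sub_mem K.one_mem (K.mul_mem (hkK hak) hbK)
    have := KM K hK M hMmax h2 h1
    linear_combination -this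
  have ha0 : a ≠ 0 := by rintro rfl; simp at hab
  obtain ⟨c, hck, hac⟩ := exists_inv k hk hak ha0
  have hbc : b = c := by
    apply mul_left_cancel₀ ha0; rw [hab, hac]
  have huR : (↑u⁻¹ : T) ∈ R := (memR_iff K hK M hMmax hTKM k hkK hk R hR hirr _).2 ⟨b, hbc ▸ hck, hbM⟩
  exact IsUnit.of_mul_eq_one (a := x) ⟨_, huR⟩ (Subtype.ext hxy)

lemma not_unitT {x : R} (h : ¬ IsUnit x) : ¬ IsUnit (x : T) :=
  fun hu => h (unitR K hK M hMmax hTKM k hkK hk R hR hirr x hu)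

/-- scaling a factorization by a pair of mutually inverse elements -/
lemma step (x : T) (hx : x ∈ R) {y z : T} (h : y * z = x) (hyM : y ∈ M) :
    ∃ y' z' : T, y' ∈ R ∧ z' ∈ R ∧ y' * z' = x ∧ (IsUnit y' ↔ IsUnit y) ∧
      (IsUnit z' ↔ IsUnit z) := by
  by_cases hzM : z ∈ M
  · exact ⟨y, z, MsubR K hK M hMmax hTKM k hkK hk R hR hirr hyM, MsubR K hK M hMmax hTKM k hkK hk R hR hirr hzM, h, Iff.rfl, Iff.rfl⟩
  · obtain ⟨b, hbK, hbM⟩ := decompT K hK M hMmax hTKM k hkK hk R hR hirr z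
    have hb0 : b ≠ 0 := by
      rintro rfl; exact hzM (by simpa using hbM)
    obtain ⟨c, hcK, hbc⟩ := exists_inv K hK hbK hb0
    have hbu : IsUnit b := IsUnit.of_mul_eq_one _ hbc
    have hcu : IsUnit c := IsUnit.of_mul_eq_one _ (by rw [mul_comm]; exact hbc)
    refine ⟨y * b, c * z, MsubR K hK M hMmax hTKM k hkK hk R hR hirr (M.mul_mem_right b hyM), ?_, ?_, ?_, ?_⟩
    · refine (memR_iff K hK M hMmax hTKM k hkK hk R hR hirr _).2 ⟨1, one_mem _, ?_⟩
      have : c * z - 1 = c * (z - b) := by linear_combination hbc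
      rw [this]; exact M.mul_mem_left _ hbM
    · rw [← h]; linear_combination y*z*hbc
    · exact ⟨fun hu => (isUnit_of_mul_isUnit_left hu), fun hu => hu.mul hbu⟩
    · exact ⟨fun hu => isUnit_of_mul_isUnit_right hu, fun hu => hcu.mul hu⟩

/-- master factorization-adjustment lemma -/
lemma master (x : T) (hx : x ∈ R) {y z : T} (h : y * z = x) :
    ∃ y' z' : T, y' ∈ R ∧ z' ∈ R ∧ y' * z' = x ∧ (IsUnit y' ↔ IsUnit y) ∧
      (IsUnit z' ↔ IsUnit z) := by
  by_cases hyM : y ∈ M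
  · exact step K hK M hMmax hTKM k hkK hk R hR hirr x hx h hyM
  by_cases hzM : z ∈ M
  · obtain ⟨z', y', hz', hy', hmul, hz'' , hy''⟩ :=
      step K hK M hMmax hTKM k hkK hk R hR hirr x hx (by rw [mul_comm]; exact h) hzM
    exact ⟨y', z', hy', hz', by rw [mul_comm]; exact hmul, hy'', hz''⟩
  -- both y, z ∉ M
  obtain ⟨b, hbK, hbM⟩ := decompT K hK M hMmax hTKM k hkK hk R hR hirr y
  have hb0 : b ≠ 0 := by rintro rfl; exact hyM (by simpa using hbM)
  obtain ⟨c, hcK, hbc⟩ := exists_inv K hK hbK hb0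
  have hbu : IsUnit b := IsUnit.of_mul_eq_one _ hbc
  have hcu : IsUnit c := IsUnit.of_mul_eq_one _ (by rw [mul_comm]; exact hbc)
  have hmul : (c * y) * (b * z) = x := by rw [← h]; linear_combination y*z*hbc
  have hy'R : c * y ∈ R := by
    refine (memR_iff K hK M hMmax hTKM k hkK hk R hR hirr _).2 ⟨1, one_mem _, ?_⟩
    have : c * y - 1 = c * (y - b) := by linear_combination hbc
    rw [this]; exact M.mul_mem_left _ hbM
  have hz'R : b * z ∈ R := by
    obtain ⟨a, hak, haM⟩ := (memR_iff K hK M hMmax hTKM k hkK hk R hR hirr x).1 hx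
    obtain ⟨d, hdK, hdM⟩ := decompT K hK M hMmax hTKM k hkK hk R hR hirr (b * z)
    have h1 : x - d ∈ M := by
      have : x - d = (c * y - 1) * (b * z) + (b * z - d) := by
        rw [← hmul]; ring
      rw [this]
      refine M.add_mem (M.mul_mem_right _ ?_) hdM
      have : c * y - 1 = c * (y - b) := by linear_combination hbc
      rw [this]; exact M.mul_mem_left _ hbM
    have had : a - d ∈ M := by
      have : a - d = (x - d) - (x - a) := by ring
      rw [this]; exact M.sub_mem h1 haM
    have : a - d = 0 := KM K hK M hMmax (K.sub_mem (hkK hak) hdK) had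
    have hda : d = a := by linear_combination -this
    exact (memR_iff K hK M hMmax hTKM k hkK hk R hR hirr _).2 ⟨a, hak, hda ▸ hdM⟩
  refine ⟨c * y, b * z, hy'R, hz'R, hmul, ?_, ?_⟩
  · exact ⟨fun hu => isUnit_of_mul_isUnit_right hu, fun hu => hcu.mul hu⟩
  · exact ⟨fun hu => isUnit_of_mul_isUnit_right hu, fun hu => hbu.mul hu⟩

/-- irreducible in T (for elements of R) implies irreducible in R -/
lemma irredR (x : R) (h : Irreducible (x : T)) : Irreducible x := by
  constructor
  · exact fun hu => h.not_isUnit (hu.map R.subtype)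
  · intro a b hab
    rcases h.isUnit_or_isUnit (show (x : T) = (a : T) * (b : T) by exact_mod_cast congrArg Subtype.val hab) with hu | hu
    · exact Or.inl (unitR K hK M hMmax hTKM k hkK hk R hR hirr a hu)
    · exact Or.inr (unitR K hK M hMmax hTKM k hkK hk R hR hirr b hu)

/-- irreducible in R implies irreducible in T -/
lemma irredT (x : R) (h : Irreducible x) : Irreducible (x : T) := by
  constructor
  · exact not_unitT K hK M hMmax hTKM k hkK hk R hR hirr h.not_isUnit
  · intro y z hab
    obtain ⟨y', z', hy', hz', hmul, hyu, hzu⟩ :=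
      master K hK M hMmax hTKM k hkK hk R hR hirr (x : T) x.2 hab.symm
    rcases h.isUnit_or_isUnit (a := ⟨y', hy'⟩) (b := ⟨z', hz'⟩)
        (Subtype.ext (by simpa using hmul.symm)) with hu | hu
    · exact Or.inl (hyu.1 (hu.map R.subtype))
    · exact Or.inr (hzu.1 (hu.map R.subtype))

/-- atoms of R do not lie in M -/
lemma atom_notMem (x : R) (h : Irreducible x) : (x : T) ∉ M :=
  fun hm => hirr _ hm (irredT K hK M hMmax hTKM k hkK hk R hR hirr x h)

/-- associated in T implies associated in R, for elements of R outside M -/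
lemma assocR (x y : R) (hxM : (x : T) ∉ M) (h : Associated (x : T) (y : T)) :
    Associated x y := by
  obtain ⟨u, hu⟩ := h
  obtain ⟨a, hak, haM⟩ := (memR_iff K hK M hMmax hTKM k hkK hk R hR hirr (x : T)).1 x.2
  have ha0 : a ≠ 0 := by
    rintro rfl; exact hxM (by simpa using haM)
  obtain ⟨b, hbk, hbM⟩ := (memR_iff K hK M hMmax hTKM k hkK hk R hR hirr (y : T)).1 y.2
  obtain ⟨d, hdK, hdM⟩ := decompT K hK M hMmax hTKM k hkK hk R hR hirr (u : T)
  have hbd : b - a * d ∈ M := by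
    have h1 : (y : T) - a * d ∈ M := by
      have : (y : T) - a * d = ((x : T) - a) * (u : T) + a * ((u : T) - d) := by
        rw [← hu]; ring
      rw [this]
      exact M.add_mem (M.mul_mem_right _ haM) (M.mul_mem_left _ hdM)
    have : b - a * d = ((y : T) - a * d) - ((y : T) - b) := by ring
    rw [this]; exact M.sub_mem h1 hbM
  have hbad : b = a * d :=
    sub_eq_zero.1 (KM K hK M hMmax (K.sub_mem (hkK hbk) (K.mul_mem (hkK hak) hdK)) hbd)
  obtain ⟨c, hck, hac⟩ := exists_inv k hk hak ha0
  have hdk : d ∈ k := by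
    have : d = c * b := by
      rw [hbad]; rw [mul_comm a c] at hac
      calc d = (c * a) * d := by rw [hac, one_mul]
        _ = c * (a * d) := by ring
    rw [this]; exact k.mul_mem hck hbk
  have huR : (u : T) ∈ R := (memR_iff K hK M hMmax hTKM k hkK hk R hR hirr _).2 ⟨d, hdk, hdM⟩
  have huu : IsUnit (⟨(u : T), huR⟩ : R) :=
    unitR K hK M hMmax hTKM k hkK hk R hR hirr _ (by simpa using u.isUnit)
  obtain ⟨w, hw⟩ := huu
  exact ⟨w, Subtype.ext (by rw [← hu]; exact congrArg (fun t : R => ((x * t : R) : T)) hw)⟩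

/-- every irreducible of T is associated to an irreducible of R -/
lemma atomize (q : T) (hq : Irreducible q) :
    ∃ r : R, Irreducible r ∧ Associated q (r : T) := by
  have hqM : q ∉ M := fun hm => hirr q hm hq
  obtain ⟨b, hbK, hbM⟩ := decompT K hK M hMmax hTKM k hkK hk R hR hirr q
  have hb0 : b ≠ 0 := by rintro rfl; exact hqM (by simpa using hbM)
  obtain ⟨c, hcK, hbc⟩ := exists_inv K hK hbK hb0
  have hcu : IsUnit c := IsUnit.of_mul_eq_one _ (by rw [mul_comm]; exact hbc)
  have hrR : c * q ∈ R := by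
    refine (memR_iff K hK M hMmax hTKM k hkK hk R hR hirr _).2 ⟨1, one_mem _, ?_⟩
    have : c * q - 1 = c * (q - b) := by linear_combination hbc
    rw [this]; exact M.mul_mem_left _ hbM
  have hassoc : Associated q (c * q) := by
    obtain ⟨v, hv⟩ := hcu
    exact ⟨v, by rw [hv]; ring⟩
  have hirrT : Irreducible ((⟨c * q, hrR⟩ : R) : T) := hassoc.irreducible hq
  exact ⟨⟨c * q, hrR⟩, irredR K hK M hMmax hTKM k hkK hk R hR hirr _ hirrT, hassoc⟩

end Main

/-- a product of elements outside a prime ideal stays outside -/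
lemma prod_notMem (M : Ideal T) (hMmax : M.IsMaximal) (s : Multiset T)
    (h : ∀ q ∈ s, q ∉ M) : s.prod ∉ M := by
  induction s using Multiset.induction_on with
  | empty =>
    simpa using fun hm => hMmax.ne_top ((Ideal.eq_top_iff_one M).2 hm)
  | cons a s ih =>
    intro hm
    rw [Multiset.prod_cons] at hm
    rcases hMmax.isPrime.mem_or_mem hm with h1 | h1
    · exact h a (Multiset.mem_cons_self a s) h1
    · exact ih (fun q hq => h q (Multiset.mem_cons_of_mem hq)) h1

/-- injectivity of multiset map on multisets carried by a set where f is injective -/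
lemma multiset_map_inj {α β : Type*} (f : α → β) (P : α → Prop)
    (hf : ∀ a a', P a → P a' → f a = f a' → a = a') :
    ∀ s t : Multiset α, (∀ a ∈ s, P a) → (∀ a ∈ t, P a) → s.map f = t.map f → s = t := by
  classical
  intro s
  induction s using Multiset.induction_on with
  | empty =>
    intro t _ _ h
    have := h.symm
    rw [Multiset.map_zero, Multiset.map_eq_zero] at this
    rw [this]
  | cons a s ih =>
    intro t hs ht h
    have hfa : f a ∈ t.map f := by
      rw [← h, Multiset.map_cons]; exact Multiset.mem_cons_self _ _
    obtain ⟨b, hb, hfb⟩ := Multiset.mem_map.1 hfa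
    have hba : b = a := hf b a (ht b hb) (hs a (Multiset.mem_cons_self a s)) hfb
    subst hba
    have ht' : t = b ::ₘ t.erase b := (Multiset.cons_erase hb).symm
    rw [ht', Multiset.map_cons, Multiset.map_cons] at h
    have := (Multiset.cons_inj_right (f b)).1 h
    rw [ht', ih (t.erase b) (fun x hx => hs x (Multiset.mem_cons_of_mem hx))
      (fun x hx => ht x (ht' ▸ Multiset.mem_cons_of_mem hx)) this]

lemma multiset_exists_rep {α : Type*} [CommMonoid α] (u : Multiset (Associates α)) :
    ∃ u₀ : Multiset α, u₀.map Associates.mk = u := by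
  induction u using Multiset.induction_on with
  | empty => exact ⟨0, rfl⟩
  | cons p u ih =>
    obtain ⟨u₀, hu⟩ := ih
    obtain ⟨x, hx⟩ := Associates.mk_surjective p
    exact ⟨x ::ₘ u₀, by rw [Multiset.map_cons, hu, hx]⟩

end UFFD7

namespace UFFD7

variable {T : Type*} [CommRing T] [IsDomain T]

/-- the canonical map on associate classes induced by the inclusion R → T -/
def phi (R : Subring T) : Associates R → Associates T :=
  Quotient.lift (fun x : R => Associates.mk (x : T))
    (fun _ _ h => Associates.mk_eq_mk_iff_associated.2 (assocT R h))

lemma phi_mk (R : Subring T) (x : R) : phi R (Associates.mk x) = Associates.mk (x : T) := by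
  rfl

lemma coe_prod (R : Subring T) (s : Multiset R) :
    ((s.map (fun r : R => (r : T))).prod) = ((s.prod : R) : T) :=
  (SubmonoidClass.coe_multiset_prod s).symm

lemma phi_prod (R : Subring T) (s : Multiset (Associates R)) :
    (s.map (phi R)).prod = phi R s.prod := by
  obtain ⟨s₀, rfl⟩ := multiset_exists_rep s
  rw [Multiset.map_map, Associates.prod_mk, phi_mk]
  rw [Function.comp_def]
  simp only [phi_mk]
  rw [show (Multiset.map (fun x : R => Associates.mk ((x : R) : T)) s₀)
        = Multiset.map Associates.mk (Multiset.map (fun r : R => (r : T)) s₀) by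
      rw [Multiset.map_map]; rfl]
  rw [Associates.prod_mk, coe_prod]

section Main2

variable (K : Subring T) (hK : IsField K)
    (M : Ideal T) (hMmax : M.IsMaximal)
    (hTKM : ∀ t : T, ∃ a ∈ K, ∃ m ∈ M, t = a + m)
    (k : Subring T) (hkK : k ≤ K) (hk : IsField k)
    (R : Subring T) (hR : ∀ x : T, x ∈ R ↔ ∃ a ∈ k, ∃ m ∈ M, x = a + m)
    (hirr : ∀ p ∈ M, ¬ Irreducible p)

include hK hMmax hTKM hkK hk hR hirr

lemma phi_irr {p : Associates R} (hp : Irreducible p) : Irreducible (phi R p) := by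
  obtain ⟨x, rfl⟩ := Associates.mk_surjective p
  rw [phi_mk, Associates.irreducible_mk]
  exact irredT K hK M hMmax hTKM k hkK hk R hR hirr x (Associates.irreducible_mk.1 hp)

lemma phi_inj {p q : Associates R} (hp : Irreducible p) (hq : Irreducible q)
    (h : phi R p = phi R q) : p = q := by
  obtain ⟨x, rfl⟩ := Associates.mk_surjective p
  obtain ⟨y, rfl⟩ := Associates.mk_surjective q
  rw [phi_mk, phi_mk, Associates.mk_eq_mk_iff_associated] at h
  rw [Associates.irreducible_mk] at hp hq
  exact Associates.mk_eq_mk_iff_associated.2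
    (assocR K hK M hMmax hTKM k hkK hk R hR hirr x y
      (atom_notMem K hK M hMmax hTKM k hkK hk R hR hirr x hp) h)

lemma atomizeMultiset (s : Multiset T) (hs : ∀ q ∈ s, Irreducible q) :
    ∃ s' : Multiset R, (∀ r ∈ s', Irreducible r) ∧
      s'.map (fun r : R => Associates.mk (r : T)) = s.map Associates.mk ∧
      Associated (s'.map (fun r : R => (r : T))).prod s.prod := by
  induction s using Multiset.induction_on with
  | empty => exact ⟨0, by simp, by simp, by simp⟩
  | cons q s ih =>
    obtain ⟨s', h1, h2, h3⟩ := ih (fun r hr => hs r (Multiset.mem_cons_of_mem hr))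
    obtain ⟨r, hrirr, hrassoc⟩ :=
      atomize K hK M hMmax hTKM k hkK hk R hR hirr q (hs q (Multiset.mem_cons_self q s))
    refine ⟨r ::ₘ s', ?_, ?_, ?_⟩
    · intro x hx
      rcases Multiset.mem_cons.1 hx with rfl | hx
      · exact hrirr
      · exact h1 x hx
    · rw [Multiset.map_cons, Multiset.map_cons, h2,
        Associates.mk_eq_mk_iff_associated.2 hrassoc.symm]
    · rw [Multiset.map_cons, Multiset.prod_cons, Multiset.prod_cons]
      exact Associated.mul_mul hrassoc.symm h3

end Main2

end UFFD7

open UFFD7 in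
theorem uffd_DplusM_without_irreducible' (T : Type*) [CommRing T] [IsDomain T]
    (K : Subring T) (hK : IsField K)
    (M : Ideal T) (hMmax : M.IsMaximal) (hM0 : M ≠ ⊥)
    (hTKM : ∀ t : T, ∃ a ∈ K, ∃ m ∈ M, t = a + m)
    (k : Subring T) (hkK : k ≤ K) (hk : IsField k)
    (R : Subring T) (hR : ∀ x : T, x ∈ R ↔ ∃ a ∈ k, ∃ m ∈ M, x = a + m)
    (hirr : ∀ p ∈ M, ¬ Irreducible p) :
    IsUFFD R ↔ IsUFFD T := by
  constructor
  · -- R U-FFD → T U-FFD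
    intro hUR t ht0 hta
    obtain ⟨s, hsirr, hsprod⟩ := hta
    obtain ⟨s', h1, h2, h3⟩ := atomizeMultiset K hK M hMmax hTKM k hkK hk R hR hirr s hsirr
    set a : R := s'.prod with ha
    have hca : ((a : R) : T) = (s'.map (fun r : R => (r : T))).prod := (coe_prod R s').symm
    have haT : Associated ((a : R) : T) t := by rw [hca]; exact h3.trans hsprod
    have ha0 : a ≠ 0 := by
      intro h0
      apply ht0
      rw [h0] at haT
      exact (associated_zero_iff_eq_zero t).1 (by simpa using haT.symm)
    have hatom : IsAtomicElem a := ⟨s', h1, ha ▸ Associated.refl _⟩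
    have hfin := hUR a ha0 hatom
    have hkey : FactorizationsOf t = FactorizationsOf ((a : R) : T) := by
      have hmk : Associates.mk t = Associates.mk ((a : R) : T) :=
        Associates.mk_eq_mk_iff_associated.2 haT.symm
      unfold FactorizationsOf
      rw [hmk]
    rw [hkey]
    apply Set.Finite.subset (hfin.image (Multiset.map (phi R)))
    rintro u ⟨hu_irr, hu_prod⟩
    obtain ⟨u₀, rfl⟩ := multiset_exists_rep u
    have hu₀irr : ∀ q ∈ u₀, Irreducible q := fun q hq =>
      Associates.irreducible_mk.1 (hu_irr _ (Multiset.mem_map_of_mem _ hq))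
    obtain ⟨u', g1, g2, g3⟩ := atomizeMultiset K hK M hMmax hTKM k hkK hk R hR hirr u₀ hu₀irr
    have hu₀a : Associated u₀.prod ((a : R) : T) := by
      rw [← Associates.mk_eq_mk_iff_associated, ← Associates.prod_mk]
      exact hu_prod
    have hprodassoc : Associated (u'.prod : R) a := by
      apply assocR K hK M hMmax hTKM k hkK hk R hR hirr
      · rw [← coe_prod R u']
        apply prod_notMem M hMmax
        intro q hq
        obtain ⟨r, hr, rfl⟩ := Multiset.mem_map.1 hq
        exact atom_notMem K hK M hMmax hTKM k hkK hk R hR hirr r (g1 r hr)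
      · rw [← coe_prod R u']
        exact g3.trans hu₀a
    refine ⟨u'.map Associates.mk, ⟨?_, ?_⟩, ?_⟩
    · intro p hp
      obtain ⟨r, hr, rfl⟩ := Multiset.mem_map.1 hp
      exact Associates.irreducible_mk.2 (g1 r hr)
    · rw [Associates.prod_mk]
      exact Associates.mk_eq_mk_iff_associated.2 hprodassoc
    · rw [Multiset.map_map]
      rw [show ((phi R) ∘ Associates.mk) = fun r : R => Associates.mk (r : T) from rfl]
      exact g2
  · -- T U-FFD → R U-FFD
    intro hUT a ha0 hatom
    obtain ⟨s, hsirr, hsassoc⟩ := hatom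
    have haT0 : ((a : R) : T) ≠ 0 := fun h => ha0 (Subtype.ext (by simpa using h))
    have hatomT : IsAtomicElem ((a : R) : T) := by
      refine ⟨s.map (fun r : R => (r : T)), ?_, ?_⟩
      · intro q hq
        obtain ⟨r, hr, rfl⟩ := Multiset.mem_map.1 hq
        exact irredT K hK M hMmax hTKM k hkK hk R hR hirr r (hsirr r hr)
      · rw [coe_prod]
        exact assocT R hsassoc
    have hfin := hUT _ haT0 hatomT
    apply Set.Finite.of_finite_image (f := Multiset.map (phi R))
    · apply hfin.subset
      rintro u ⟨s₁, ⟨hirr1, hprod1⟩, rfl⟩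
      constructor
      · intro p hp
        obtain ⟨q, hq, rfl⟩ := Multiset.mem_map.1 hp
        exact phi_irr K hK M hMmax hTKM k hkK hk R hR hirr (hirr1 q hq)
      · rw [phi_prod, hprod1, phi_mk]
    · intro s₁ hs₁ s₂ hs₂ h
      exact multiset_map_inj (phi R) Irreducible
        (fun p q hp hq => phi_inj K hK M hMmax hTKM k hkK hk R hR hirr hp hq)
        s₁ s₂ hs₁.1 hs₂.1 h

/-- Let `T` be an integral domain, `K` a subring of `T` that is a field, and
`M` a nonzero maximal ideal of `T` such that `T = K + M`. Let `k` be a subfield of `K` and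
let `R = k + M` (a subring of `T`). If `M` contains no irreducible element of `T`, then `R`
is a U-FFD if and only if `T` is a U-FFD. -/
theorem uffd_DplusM_without_irreducible (T : Type*) [CommRing T] [IsDomain T]
    (K : Subring T) (hK : IsField K)
    (M : Ideal T) (hMmax : M.IsMaximal) (hM0 : M ≠ ⊥)
    (hTKM : ∀ t : T, ∃ a ∈ K, ∃ m ∈ M, t = a + m)
    (k : Subring T) (hkK : k ≤ K) (hk : IsField k)
    (R : Subring T) (hR : ∀ x : T, x ∈ R ↔ ∃ a ∈ k, ∃ m ∈ M, x = a + m)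
    (hirr : ∀ p ∈ M, ¬ Irreducible p) :
    IsUFFD R ↔ IsUFFD T :=
  uffd_DplusM_without_irreducible' T K hK M hMmax hM0 hTKM k hkK hk R hR hirr
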